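/- Let xs < xt be integers, C ≥ 0 a real number, and f : ℤ → ℝ a function satisfying the Ameso(C) condition on [xs,xt]. Suppose there exist x0 ∈ [xs,xt] and a positive integer b with xs ≤ x0 − b such that (a) f(x0) = min over y ∈ [x0−b, x0] of f(y), and (b) f(x0) + C ≤ max over y ∈ [x0−b, x0] of f(y). Let w be the smallest element of [x0−b, x0] at which f attains its maximum over [x0−b, x0]. Then 2·w < 2·x0 − b (i.e., w lies in the left half-open interval [x0 − b, x0 − b/2)). -/
import Mathlib


/-- Ceiling of `(x+y)/2` as a rational. -/
def mceil (x y : ℤ) : ℤ := ⌈((x : ℚ) + (y : ℚ)) / 2⌉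

/-- Floor of `(x+y)/2` as a rational. -/
def mfloor (x y : ℤ) : ℤ := ⌊((x : ℚ) + (y : ℚ)) / 2⌋

lemma mceil_same (w x0 : ℤ) : mceil (2 * w - x0) x0 = w := by
  unfold mceil
  have : ((2 * w - x0 : ℤ) : ℚ) + (x0 : ℚ) = (w : ℚ) * 2 := by push_cast; ring
  rw [this, mul_div_cancel_right₀ _ (by norm_num : (2:ℚ) ≠ 0)]
  exact Int.ceil_intCast w

lemma mfloor_same (w x0 : ℤ) : mfloor (2 * w - x0) x0 = w := by
  unfold mfloor
  have : ((2 * w - x0 : ℤ) : ℚ) + (x0 : ℚ) = (w : ℚ) * 2 := by push_cast; ring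
  rw [this, mul_div_cancel_right₀ _ (by norm_num : (2:ℚ) ≠ 0)]
  exact Int.floor_intCast w

/-- Lemma 4: if `f(x0)` is the minimum of `f` on `[x0-b, x0]` and
`f(x0) + C ≤ max_{[x0-b, x0]} f`, then the smallest maximizer `w` of `f` on `[x0-b, x0]`
lies in the left half `[x0 - b, x0 - b/2)`, i.e. `2w < 2x0 - b`. -/
theorem ameso_leftnarrow_local
    (xs xt : ℤ) (hxst : xs < xt) (C : ℝ) (hC : 0 ≤ C) (f : ℤ → ℝ)
    (hAmeso : ∀ x ∈ Finset.Icc xs xt, ∀ y ∈ Finset.Icc xs xt,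
      f x + f y + C ≥ f (mceil x y) + f (mfloor x y))
    (x0 : ℤ) (hx0l : xs ≤ x0) (hx0r : x0 ≤ xt)
    (b : ℤ) (hb : 0 < b) (hbs : xs ≤ x0 - b)
    (hmin : f x0 = (Finset.Icc (x0 - b) x0).inf' (Finset.nonempty_Icc.2 (by omega)) f)
    (hmax : f x0 + C ≤ (Finset.Icc (x0 - b) x0).sup' (Finset.nonempty_Icc.2 (by omega)) f)
    (w : ℤ) (hw : w ∈ Finset.Icc (x0 - b) x0)
    (hwmax : f w = (Finset.Icc (x0 - b) x0).sup' (Finset.nonempty_Icc.2 (by omega)) f)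
    (hwsmallest : ∀ v ∈ Finset.Icc (x0 - b) x0, f v = f w → w ≤ v) :
    2 * w < 2 * x0 - b := by
  by_contra hcon
  push_neg at hcon
  simp only [Finset.mem_Icc] at hw
  set x' : ℤ := 2 * w - x0 with hx'
  have hx'mem : x' ∈ Finset.Icc (x0 - b) x0 := by
    simp only [Finset.mem_Icc]; omega
  have hle : ∀ v ∈ Finset.Icc (x0 - b) x0, f v ≤ f w := by
    intro v hv
    rw [hwmax]
    exact Finset.le_sup' f hv
  have hge : ∀ v ∈ Finset.Icc (x0 - b) x0, f x0 ≤ f v := by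
    intro v hv
    rw [hmin]
    exact Finset.inf'_le f hv
  have hfx0 : f x0 + C ≤ f w := by rw [hwmax]; exact hmax
  have hA := hAmeso x' (by simp only [Finset.mem_Icc]; omega) x0
    (by simp only [Finset.mem_Icc]; omega)
  rw [mceil_same, mfloor_same] at hA
  have hfx' : f x' = f w := by
    have h1 : f x' ≤ f w := hle x' hx'mem
    have h2 : f w ≤ f x' := by linarith
    linarith
  have hwx' : w ≤ x' := hwsmallest x' hx'mem hfx'
  have hwx0 : w = x0 := by omega
  have hmem' : (x0 - b) ∈ Finset.Icc (x0 - b) x0 := by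
    simp only [Finset.mem_Icc]; omega
  have : f (x0 - b) = f w := by
    have h1 := hle (x0 - b) hmem'
    have h2 := hge (x0 - b) hmem'
    rw [hwx0] at h1 ⊢
    linarith
  have := hwsmallest (x0 - b) hmem' this
  omega
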